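/- Let N_1, N_2, D ∈ C with N_2 ≠ 0, D ≠ 0, let J ∈ C \ {0}, M ∈ C, and set M̂ = tanh(M/2), e_0 = (N_1−N_2)/D, e_1 = (N_1+N_2)/D, f_0 = −M̂ J, f_1 = −J/M̂. Then the cross ratio satisfies (1 + R)/(1 − R) = cosh(M)·(N_1/N_2) + sinh(M)·x, where R = R(f_0, f_1, e_0, e_1) and x = (1/2)·(D J^2 + (N_1^2 − N_2^2)/D)/(J N_2). -/

import Mathlib

open Complex

/-- The cross ratio `R(a,b,c,d) = ((a−c)(b−d))/((a−d)(b−c))`. -/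
noncomputable def crossRatio (a b c d : ℂ) : ℂ :=
  ((a - c) * (b - d)) / ((a - d) * (b - c))

set_option maxHeartbeats 1600000 in
/-- With `N₁, N₂, D ∈ ℂ`, `N₂ ≠ 0`, `D ≠ 0`, `J ≠ 0`, `M ∈ ℂ`,
`M̂ = tanh(M/2)`, `e₀ = (N₁−N₂)/D`, `e₁ = (N₁+N₂)/D`, `f₀ = −M̂ J`, `f₁ = −J/M̂`,
and `R = R(f₀, f₁, e₀, e₁)`, one has
`(1 + R)/(1 − R) = cosh(M)·(N₁/N₂) + sinh(M)·x` where
`x = (1/2)(D J² + (N₁² − N₂²)/D)/(J N₂)` (all denominators assumed nonzero). -/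
theorem crossRatio_H4_identity (N₁ N₂ D J M : ℂ)
    (hN₂ : N₂ ≠ 0) (hD : D ≠ 0) (hJ : J ≠ 0)
    (hcosh : Complex.cosh (M / 2) ≠ 0) (hMhat : Complex.tanh (M / 2) ≠ 0)
    (e₀ e₁ f₀ f₁ R x : ℂ)
    (he₀ : e₀ = (N₁ - N₂) / D) (he₁ : e₁ = (N₁ + N₂) / D)
    (hf₀ : f₀ = -Complex.tanh (M / 2) * J) (hf₁ : f₁ = -J / Complex.tanh (M / 2))
    (hR : R = crossRatio f₀ f₁ e₀ e₁)
    (hden₁ : f₀ - e₁ ≠ 0) (hden₂ : f₁ - e₀ ≠ 0) (hR1 : R ≠ 1)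
    (hx : x = (1 / 2) * (D * J ^ 2 + (N₁ ^ 2 - N₂ ^ 2) / D) / (J * N₂)) :
    (1 + R) / (1 - R) = Complex.cosh M * (N₁ / N₂) + Complex.sinh M * x := by

  set t := Complex.tanh (M / 2) with ht
  have hc2 : Complex.cosh (M/2)^2 - Complex.sinh (M/2)^2 = 1 :=
    Complex.cosh_sq_sub_sinh_sq _
  have hs : Complex.sinh (M/2) ≠ 0 := fun h =>
    hMhat (by rw [ht, Complex.tanh_eq_sinh_div_cosh, h, zero_div])
  have htd : t = Complex.sinh (M/2) / Complex.cosh (M/2) := by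
    rw [ht, Complex.tanh_eq_sinh_div_cosh]
  have hMhat' : t ≠ 0 := hMhat
  have h1t : 1 - t^2 ≠ 0 := by
    rw [htd, div_pow]
    intro h
    rw [sub_eq_zero] at h
    have h2 : Complex.sinh (M/2)^2 = Complex.cosh (M/2)^2 :=
      (div_eq_one_iff_eq (pow_ne_zero 2 hcosh)).mp h.symm
    rw [h2, sub_self] at hc2
    exact zero_ne_one hc2
  have hM2 : M = 2 * (M/2) := by ring
  have hcoshM : Complex.cosh M = (1 + t^2) / (1 - t^2) := by
    rw [eq_div_iff h1t, hM2, Complex.cosh_two_mul, htd]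
    field_simp
    all_goals first
      | (ring_nf; ring_nf at hc2; linear_combination (Complex.cosh (M*(1/2))^2 + Complex.sinh (M*(1/2))^2) * hc2)
      | ring
      | linear_combination (2 * Complex.cosh (M/2)^2 - 1) * Complex.cosh (M/2)^2 * hc2
      | linear_combination (1 - 2 * Complex.cosh (M/2)^2) * Complex.cosh (M/2)^2 * hc2
  have hsinhM : Complex.sinh M = (2 * t) / (1 - t^2) := by
    rw [eq_div_iff h1t, hM2, Complex.sinh_two_mul, htd]
    field_simp
    all_goals first
      | (ring_nf; ring_nf at hc2; linear_combination hc2)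
      | ring
      | linear_combination 2 * Complex.sinh (M/2) * Complex.cosh (M/2)^3 * hc2
      | linear_combination (-2) * Complex.sinh (M/2) * Complex.cosh (M/2)^3 * hc2
  set A := (f₀ - e₁) * (f₁ - e₀) with hAdef
  set B := (f₀ - e₀) * (f₁ - e₁) with hBdef
  have hA : A ≠ 0 := mul_ne_zero hden₁ hden₂
  have hAB : A - B ≠ 0 := by
    intro h
    apply hR1
    rw [hR, crossRatio, div_eq_one_iff_eq hA]
    linear_combination -h
  have hRBA : R = B / A := by rw [hR, crossRatio]
  have key : (1 + R) / (1 - R) = (A + B) / (A - B) := by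
    rw [hRBA, show 1 + B / A = (A + B) / A from by rw [add_div, div_self hA],
        show 1 - B / A = (A - B) / A from by rw [sub_div, div_self hA]]
    exact div_div_div_cancel_right₀ hA _ _
  have hAplusB : A + B = 2 * (J^2 + (N₁^2 - N₂^2)/D^2 + J * (t^2 + 1)/t * N₁/D) := by
    rw [hAdef, hBdef, hf₀, hf₁, he₀, he₁]
    field_simp
    ring
  have hAsubB : A - B = 2 * J * (1 - t^2)/t * N₂/D := by
    rw [hAdef, hBdef, hf₀, hf₁, he₀, he₁]
    field_simp
    ring
  rw [key, hAplusB, hAsubB, hcoshM, hsinhM, hx]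
  clear_value t A B
  obtain ⟨u, hu⟩ : ∃ u, 1 - t^2 = u := ⟨_, rfl⟩
  rw [hu] at h1t ⊢
  have hden : 2 * J * u/t * N₂/D ≠ 0 :=
    div_ne_zero (mul_ne_zero (div_ne_zero (mul_ne_zero (mul_ne_zero two_ne_zero hJ) h1t) hMhat') hN₂) hD
  field_simp [hJ, hD, hN₂, hMhat', h1t]
  ring
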